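/- Let a < b be positive integers with gcd(a,b) = 1 and b ≥ a + 3. Consider the affine semigroup S = ⟨(0, a+2b), (a, 2b), (b, a+b), (a+b, b), (a+2b, 0)⟩ ⊆ ℕ². Then the vector v = (a(b-1), 2b² - a - 4b) satisfies: v + (0, a+2b) ∈ S, v + (a+2b, 0) ∈ S, but v ∉ S. -/

import Mathlib

/-- For coprime `0 < a < b` with `b ≥ a + 3`, the vector
`v = (a(b-1), 2b² - a - 4b)` satisfies `v + (0, a+2b) ∈ S` and
`v + (a+2b, 0) ∈ S` but `v ∉ S`, where `S` is the affine semigroup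
generated by `(0,a+2b), (a,2b), (b,a+b), (a+b,b), (a+2b,0)`. -/
theorem stmt_7 (a b : ℤ) (ha : 0 < a) (hab : a < b) (hcop : IsCoprime a b)
    (hb : a + 3 ≤ b) :
    let S := AddSubmonoid.closure
      ({(0, a + 2 * b), (a, 2 * b), (b, a + b), (a + b, b), (a + 2 * b, 0)} : Set (ℤ × ℤ))
    let v : ℤ × ℤ := (a * (b - 1), 2 * b ^ 2 - a - 4 * b)
    v + (0, a + 2 * b) ∈ S ∧ v + (a + 2 * b, 0) ∈ S ∧ v ∉ S := by
  intro S v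
  have hg1 : ((0:ℤ), a + 2 * b) ∈ S := AddSubmonoid.subset_closure (by simp)
  have hg2 : ((a:ℤ), 2 * b) ∈ S := AddSubmonoid.subset_closure (by simp)
  have hg3 : ((b:ℤ), a + b) ∈ S := AddSubmonoid.subset_closure (by simp)
  refine ⟨?_, ?_, ?_⟩
  · have h1 : v + (0, a + 2 * b) = (b - 1).toNat • ((a:ℤ), 2 * b) := by
      have : ((b - 1).toNat : ℤ) = b - 1 := Int.toNat_of_nonneg (by omega)
      simp only [v, Prod.smul_mk, nsmul_eq_mul, Prod.mk_add_mk, this, Prod.mk.injEq]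
      constructor <;> ring
    rw [h1]
    exact AddSubmonoid.nsmul_mem S hg2 _
  · have h1 : v + (a + 2 * b, 0) =
        (b - a - 3).toNat • ((0:ℤ), a + 2 * b) + (a + 2).toNat • ((b:ℤ), a + b) := by
      have e1 : ((b - a - 3).toNat : ℤ) = b - a - 3 := Int.toNat_of_nonneg (by omega)
      have e2 : ((a + 2).toNat : ℤ) = a + 2 := Int.toNat_of_nonneg (by omega)
      simp only [v, Prod.smul_mk, nsmul_eq_mul, Prod.mk_add_mk, e1, e2, Prod.mk.injEq]
      constructor <;> ring
    rw [h1]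
    exact S.add_mem (AddSubmonoid.nsmul_mem S hg1 _) (AddSubmonoid.nsmul_mem S hg3 _)
  · intro hv
    have key : ∀ x ∈ S, ∃ p q n : ℕ, (p : ℤ) ≤ n ∧ x.1 = p * a + q * b ∧
        x.1 + x.2 = n * (a + 2 * b) := by
      intro x hx
      induction hx using AddSubmonoid.closure_induction with
      | mem y hy =>
        simp only [Set.mem_insert_iff, Set.mem_singleton_iff] at hy
        rcases hy with h | h | h | h | h <;> subst h
        · exact ⟨0, 0, 1, by norm_num, by norm_num, by push_cast; ring⟩
        · exact ⟨1, 0, 1, by norm_num, by push_cast; ring, by push_cast; ring⟩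
        · exact ⟨0, 1, 1, by norm_num, by push_cast; ring, by push_cast; ring⟩
        · exact ⟨1, 1, 1, by norm_num, by push_cast; ring, by push_cast; ring⟩
        · exact ⟨1, 2, 1, by norm_num, by push_cast; ring, by push_cast; ring⟩
      | zero => exact ⟨0, 0, 0, by norm_num, by norm_num, by norm_num⟩
      | add x y _ _ ihx ihy =>
        obtain ⟨p1, q1, n1, h1, h2, h3⟩ := ihx
        obtain ⟨p2, q2, n2, h4, h5, h6⟩ := ihy
        exact ⟨p1 + p2, q1 + q2, n1 + n2, by push_cast; omega,
          by simp [Prod.fst_add]; linarith,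
          by simp [Prod.fst_add, Prod.snd_add]; linarith⟩
    obtain ⟨p, q, n, hpn, h1, h2⟩ := key v hv
    simp only [v] at h1 h2
    have hn : (n : ℤ) = b - 2 := by
      have : (a * (b - 1)) + (2 * b ^ 2 - a - 4 * b) = (b - 2) * (a + 2 * b) := by ring
      have hpos : (0:ℤ) < a + 2 * b := by omega
      nlinarith [h2]
    have hdvd : b ∣ a * (b - 1 - (p:ℤ)) := ⟨q, by linarith⟩
    have hdvd2 : b ∣ (b - 1 - (p:ℤ)) := hcop.symm.dvd_of_dvd_mul_left hdvd
    have hlt : b ≤ b - 1 - (p:ℤ) := Int.le_of_dvd (by omega) hdvd2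
    omega
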